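/- Define S(α) = Σ_{X/2 < p ≤ X} (log p)·e(α·p·log p), where the sum is over primes p and e(y) = exp(2πiy). Then for every real number n, ∫_n^{n+1} |S(α)|² dα ≪ X·(log X)², for X sufficiently large. -/

import Mathlib

open Finset

noncomputable def Ssum (X α : ℝ) : ℂ :=
  ∑ p ∈ (Finset.Ioc ⌊X / 2⌋₊ ⌊X⌋₊).filter Nat.Prime,
    (Real.log p : ℂ) * Complex.exp (2 * Real.pi * Complex.I * (α * p * Real.log p))

noncomputable def Faux (P : Finset ℕ) (a b : ℕ → ℝ) (α : ℝ) : ℂ :=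
  ∑ p ∈ P, ∑ q ∈ P, ((a p : ℂ) * (a q : ℂ)) * Complex.exp (Complex.I * ((b p - b q : ℝ) : ℂ) * α)

noncomputable def gaux (X : ℝ) (p q : ℕ) : ℝ :=
  if p = q then Real.log X ^ 2 else (2/Real.pi) * Real.log X * (1/|(p:ℝ) - (q:ℝ)|)

lemma hcexp (c : ℝ) : Continuous fun α : ℝ => Complex.exp (Complex.I * c * α) :=
  Complex.continuous_exp.comp (continuous_const.mul Complex.continuous_ofReal)

lemma Faux_cont (P : Finset ℕ) (a b : ℕ → ℝ) : Continuous fun α => Faux P a b α := by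
  apply continuous_finset_sum
  intro p _
  apply continuous_finset_sum
  intro q _
  exact continuous_const.mul (hcexp _)

lemma key (P : Finset ℕ) (a b : ℕ → ℝ) (n : ℝ) :
    ∫ α in n..(n+1), ‖∑ p ∈ P, (a p : ℂ) * Complex.exp (Complex.I * (b p) * α)‖ ^ 2
      ≤ ∑ p ∈ P, ∑ q ∈ P, |a p| * |a q| *
          ‖∫ α in n..(n+1), Complex.exp (Complex.I * ((b p - b q : ℝ) : ℂ) * α)‖ := by
  have step1 : ∀ α : ℝ, (‖∑ p ∈ P, (a p : ℂ) * Complex.exp (Complex.I * (b p) * α)‖) ^ 2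
      = (Faux P a b α).re := by
    intro α
    set z := ∑ p ∈ P, (a p : ℂ) * Complex.exp (Complex.I * (b p) * α) with hz
    have h1 : Faux P a b α = z * (starRingEnd ℂ) z := by
      rw [hz, map_sum, Finset.sum_mul_sum, Faux]
      refine Finset.sum_congr rfl fun p _ => Finset.sum_congr rfl fun q _ => ?_
      rw [map_mul, Complex.conj_ofReal, ← Complex.exp_conj]
      have : (starRingEnd ℂ) (Complex.I * (b q) * α) = -Complex.I * (b q) * α := by
        simp [Complex.conj_I]
      rw [this, mul_mul_mul_comm, ← Complex.exp_add]
      congr 1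
      push_cast
      ring
    rw [h1, Complex.mul_conj, ← Complex.sq_norm, Complex.ofReal_re]
  rw [intervalIntegral.integral_congr (fun α _ => step1 α)]
  have hInt : IntervalIntegrable (Faux P a b) MeasureTheory.volume n (n+1) :=
    (Faux_cont P a b).intervalIntegrable n (n+1)
  have step2 := (Complex.reCLM.intervalIntegral_comp_comm hInt).symm
  simp only [Complex.reCLM_apply] at step2
  rw [← step2]
  have step3 : (∫ α in n..(n+1), Faux P a b α) = ∑ p ∈ P, ∑ q ∈ P,
      ((a p : ℂ) * (a q : ℂ)) * ∫ α in n..(n+1), Complex.exp (Complex.I * ((b p - b q : ℝ) : ℂ) * α) := by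
    unfold Faux
    rw [intervalIntegral.integral_finset_sum]
    · refine Finset.sum_congr rfl fun p _ => ?_
      rw [intervalIntegral.integral_finset_sum]
      · exact Finset.sum_congr rfl fun q _ => intervalIntegral.integral_const_mul _ _
      · intro q _; exact (continuous_const.mul (hcexp _)).intervalIntegrable _ _
    · intro p _
      exact (continuous_finset_sum _ fun q _ => continuous_const.mul (hcexp _)).intervalIntegrable _ _
  rw [step3]
  calc (∑ p ∈ P, ∑ q ∈ P, ((a p : ℂ) * (a q : ℂ)) *
        ∫ α in n..(n+1), Complex.exp (Complex.I * ((b p - b q : ℝ) : ℂ) * α)).re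
      ≤ ‖∑ p ∈ P, ∑ q ∈ P, ((a p : ℂ) * (a q : ℂ)) *
        ∫ α in n..(n+1), Complex.exp (Complex.I * ((b p - b q : ℝ) : ℂ) * α)‖ := Complex.re_le_norm _
    _ ≤ ∑ p ∈ P, ‖∑ q ∈ P, ((a p : ℂ) * (a q : ℂ)) *
        ∫ α in n..(n+1), Complex.exp (Complex.I * ((b p - b q : ℝ) : ℂ) * α)‖ := norm_sum_le _ _
    _ ≤ ∑ p ∈ P, ∑ q ∈ P, ‖((a p : ℂ) * (a q : ℂ)) *
        ∫ α in n..(n+1), Complex.exp (Complex.I * ((b p - b q : ℝ) : ℂ) * α)‖ :=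
        Finset.sum_le_sum fun p _ => norm_sum_le _ _
    _ = ∑ p ∈ P, ∑ q ∈ P, |a p| * |a q| *
        ‖∫ α in n..(n+1), Complex.exp (Complex.I * ((b p - b q : ℝ) : ℂ) * α)‖ := by
        refine Finset.sum_congr rfl fun p _ => Finset.sum_congr rfl fun q _ => ?_
        rw [norm_mul, norm_mul, Complex.norm_real, Complex.norm_real, Real.norm_eq_abs, Real.norm_eq_abs]

lemma E0 (n : ℝ) : (∫ α in n..(n+1), Complex.exp (Complex.I * ((0:ℝ):ℂ) * α)) = 1 := by
  simp

lemma Eb {d : ℝ} (n : ℝ) (hd : d ≠ 0) :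
    ‖∫ α in n..(n+1), Complex.exp (Complex.I * (d:ℂ) * α)‖ ≤ 2 / |d| := by
  have hc : Complex.I * (d:ℂ) ≠ 0 := by
    simp [Complex.I_ne_zero, hd]
  rw [integral_exp_mul_complex hc]
  rw [norm_div]
  have h1 : ∀ x : ℝ, ‖Complex.exp (Complex.I * (d:ℂ) * x)‖ = 1 := by
    intro x
    rw [Complex.norm_exp]
    have : (Complex.I * (d:ℂ) * (x:ℂ)).re = 0 := by simp
    rw [this, Real.exp_zero]
  have h2 : ‖Complex.I * (d:ℂ)‖ = |d| := by
    rw [norm_mul, Complex.norm_I, Complex.norm_real, Real.norm_eq_abs, one_mul]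
  rw [h2]
  gcongr
  calc ‖Complex.exp (Complex.I * (d:ℂ) * (n+1:ℝ)) - Complex.exp (Complex.I * (d:ℂ) * (n:ℝ))‖
      ≤ ‖Complex.exp (Complex.I * (d:ℂ) * (n+1:ℝ))‖ +
        ‖Complex.exp (Complex.I * (d:ℂ) * (n:ℝ))‖ := by
        simpa [sub_eq_add_neg] using norm_add_le (Complex.exp (Complex.I * (d:ℂ) * (n+1:ℝ)))
          (-Complex.exp (Complex.I * (d:ℂ) * (n:ℝ)))
    _ = 2 := by rw [h1, h1]; norm_num

lemma gap {M x y : ℝ} (hM : 1 ≤ M) (hx : M ≤ x) (hxy : x ≤ y) :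
    (y - x) * Real.log M ≤ y * Real.log y - x * Real.log x := by
  have hM0 : (0:ℝ) < M := lt_of_lt_of_le one_pos hM
  have h1 : Real.log M ≤ Real.log x := Real.log_le_log hM0 hx
  have h2 : Real.log x ≤ Real.log y := Real.log_le_log (hM0.trans_le hx) hxy
  have h0 : 0 ≤ Real.log M := Real.log_nonneg hM
  nlinarith

lemma gap' {M x y : ℝ} (hM : 1 ≤ M) (hx : M ≤ x) (hy : M ≤ y) :
    |x - y| * Real.log M ≤ |x * Real.log x - y * Real.log y| := by
  rcases le_total x y with h | h
  · rw [abs_sub_comm, _root_.abs_of_nonneg (sub_nonneg.2 h), abs_sub_comm]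
    exact le_trans (gap hM hx h) (le_abs_self _)
  · rw [_root_.abs_of_nonneg (sub_nonneg.2 h)]
    exact le_trans (gap hM hy h) (le_abs_self _)

lemma harmIcc (B : ℕ) : ∑ k ∈ Finset.Icc 1 B, (1:ℝ)/(k:ℝ) ≤ 1 + Real.log B := by
  have h : ∑ k ∈ Finset.Icc 1 B, (1:ℝ)/(k:ℝ) = (harmonic B : ℝ) := by
    rw [harmonic_eq_sum_Icc]
    push_cast
    simp [one_div]
  rw [h]
  exact harmonic_le_one_add_log B

lemma harm {A B p : ℕ} (hp : p ≤ B) :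
    ∑ q ∈ (Finset.Ioc A B).erase p, (1:ℝ)/|(p:ℝ) - (q:ℝ)| ≤ 2*(1 + Real.log B) := by
  set S := (Finset.Ioc A B).erase p with hS
  have hmem : ∀ q ∈ S, q ≠ p ∧ q ≤ B := by
    intro q hq
    rw [hS, Finset.mem_erase, Finset.mem_Ioc] at hq
    exact ⟨hq.1, hq.2.2⟩
  rw [← Finset.sum_filter_add_sum_filter_not S (fun q => q < p)]
  have key : ∀ (T : Finset ℕ) (f : ℕ → ℕ), (∀ q ∈ T, f q ∈ Finset.Icc 1 B) →
      (∀ q₁ ∈ T, ∀ q₂ ∈ T, f q₁ = f q₂ → q₁ = q₂) →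
      ∑ q ∈ T, (1:ℝ)/(f q : ℝ) ≤ 1 + Real.log B := by
    intro T f hf hinj
    rw [show (∑ q ∈ T, (1:ℝ)/(f q : ℝ)) = ∑ k ∈ T.image f, (1:ℝ)/(k:ℝ) from
      (Finset.sum_image (g := f) (f := fun k : ℕ => (1:ℝ)/(k:ℝ)) hinj).symm]
    refine le_trans (Finset.sum_le_sum_of_subset_of_nonneg ?_ ?_) (harmIcc B)
    · intro k hk
      obtain ⟨q, hq, rfl⟩ := Finset.mem_image.mp hk
      exact hf q hq
    · intro k _ _
      positivity
  have h1 : ∑ q ∈ S.filter (fun q => q < p), (1:ℝ)/|(p:ℝ) - (q:ℝ)| ≤ 1 + Real.log B := by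
    have : ∀ q ∈ S.filter (fun q => q < p), (1:ℝ)/|(p:ℝ) - (q:ℝ)| = (1:ℝ)/((p - q : ℕ) : ℝ) := by
      intro q hq
      rw [Finset.mem_filter] at hq
      have hlt : q < p := hq.2
      have hpos : (0:ℝ) < (p:ℝ) - (q:ℝ) := by
        have : (q:ℝ) < (p:ℝ) := Nat.cast_lt.mpr hlt
        linarith
      rw [_root_.abs_of_pos hpos, Nat.cast_sub hlt.le]
    rw [Finset.sum_congr rfl this]
    refine key _ _ ?_ ?_
    · intro q hq
      rw [Finset.mem_filter] at hq
      rw [Finset.mem_Icc]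
      omega
    · intro q₁ h₁ q₂ h₂ hfe
      rw [Finset.mem_filter] at h₁ h₂
      omega
  have h2 : ∑ q ∈ S.filter (fun q => ¬ q < p), (1:ℝ)/|(p:ℝ) - (q:ℝ)| ≤ 1 + Real.log B := by
    have : ∀ q ∈ S.filter (fun q => ¬ q < p), (1:ℝ)/|(p:ℝ) - (q:ℝ)| = (1:ℝ)/((q - p : ℕ) : ℝ) := by
      intro q hq
      rw [Finset.mem_filter] at hq
      have hgt : p < q := lt_of_le_of_ne (not_lt.mp hq.2) (Ne.symm (hmem q hq.1).1)
      have hpos : (0:ℝ) < (q:ℝ) - (p:ℝ) := by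
        have : (p:ℝ) < (q:ℝ) := Nat.cast_lt.mpr hgt
        linarith
      rw [abs_sub_comm, _root_.abs_of_pos hpos, Nat.cast_sub hgt.le]
    rw [Finset.sum_congr rfl this]
    refine key _ _ ?_ ?_
    · intro q hq
      rw [Finset.mem_filter] at hq
      have := (hmem q hq.1).2
      have h3 := lt_of_le_of_ne (not_lt.mp hq.2) (Ne.symm (hmem q hq.1).1)
      rw [Finset.mem_Icc]
      omega
    · intro q₁ h₁ q₂ h₂ hfe
      rw [Finset.mem_filter] at h₁ h₂
      have g₁ := lt_of_le_of_ne (not_lt.mp h₁.2) (Ne.symm (hmem q₁ h₁.1).1)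
      have g₂ := lt_of_le_of_ne (not_lt.mp h₂.2) (Ne.symm (hmem q₂ h₂.1).1)
      omega
  linarith

theorem stmt6 :
    ∃ C : ℝ, 0 < C ∧ ∃ X₀ : ℝ, ∀ X : ℝ, X ≥ X₀ → ∀ n : ℝ,
      ∫ α in n..(n + 1), ‖Ssum X α‖ ^ 2 ≤ C * X * Real.log X ^ 2 := by
  refine ⟨5, by norm_num, 100, fun X hX n => ?_⟩
  have hX0 : (0:ℝ) < X := by linarith
  have hL1 : 1 ≤ Real.log X := by
    rw [Real.le_log_iff_exp_le hX0]
    have := Real.exp_one_lt_d9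
    linarith
  have hL0 : (0:ℝ) < Real.log X := by linarith
  have hhalf : (1:ℝ) ≤ X/2 := by linarith
  have hlogX2 : Real.log X ≤ 2 * Real.log (X/2) := by
    have e1 : Real.log X = Real.log (X/2) + Real.log 2 := by
      rw [← Real.log_mul (by linarith) (by norm_num), div_mul_cancel₀ X (by norm_num : (2:ℝ) ≠ 0)]
    have e2 : Real.log 2 ≤ Real.log (X/2) := Real.log_le_log (by norm_num) (by linarith)
    linarith
  have hMlog : (0:ℝ) ≤ Real.log (X/2) := Real.log_nonneg hhalf
  set P := (Finset.Ioc ⌊X / 2⌋₊ ⌊X⌋₊).filter Nat.Prime with hP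
  have hPfact : ∀ p ∈ P, X/2 < (p:ℝ) ∧ (p:ℝ) ≤ X ∧ 2 ≤ p := by
    intro p hp
    rw [hP, Finset.mem_filter, Finset.mem_Ioc] at hp
    refine ⟨?_, ?_, hp.2.two_le⟩
    · calc X/2 < (⌊X/2⌋₊ : ℝ) + 1 := Nat.lt_floor_add_one _
        _ ≤ (p:ℝ) := by exact_mod_cast Nat.succ_le_of_lt hp.1.1
    · exact le_trans (Nat.cast_le.mpr hp.1.2) (Nat.floor_le hX0.le)
  have hSs : ∀ α : ℝ, Ssum X α
      = ∑ p ∈ P, ((Real.log p : ℝ) : ℂ) *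
          Complex.exp (Complex.I * ((2*Real.pi*((p:ℝ)*Real.log p) : ℝ) : ℂ) * (α:ℝ)) := by
    intro α
    unfold Ssum
    refine Finset.sum_congr rfl fun p _ => ?_
    congr 1
    congr 1
    push_cast
    ring
  rw [intervalIntegral.integral_congr (fun α _ => by rw [hSs α])]
  refine le_trans (key P (fun p => Real.log p) (fun p => 2*Real.pi*((p:ℝ)*Real.log p)) n) ?_
  have hterm : ∀ p ∈ P, ∀ q ∈ P,
      |Real.log (p:ℝ)| * |Real.log (q:ℝ)| * ‖∫ α in n..(n+1),
        Complex.exp (Complex.I * ((2*Real.pi*((p:ℝ)*Real.log p) - 2*Real.pi*((q:ℝ)*Real.log q) : ℝ) : ℂ) * α)‖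
        ≤ gaux X p q := by
    intro p hp q hq
    obtain ⟨hpl, hpu, hp2⟩ := hPfact p hp
    obtain ⟨hql, hqu, hq2⟩ := hPfact q hq
    have hp1 : (1:ℝ) ≤ (p:ℝ) := by exact_mod_cast Nat.one_le_of_lt hp2
    have hq1 : (1:ℝ) ≤ (q:ℝ) := by exact_mod_cast Nat.one_le_of_lt hq2
    have halp : |Real.log (p:ℝ)| = Real.log (p:ℝ) := _root_.abs_of_nonneg (Real.log_nonneg hp1)
    have halq : |Real.log (q:ℝ)| = Real.log (q:ℝ) := _root_.abs_of_nonneg (Real.log_nonneg hq1)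
    have hlpX : Real.log (p:ℝ) ≤ Real.log X := Real.log_le_log (by linarith) hpu
    have hlqX : Real.log (q:ℝ) ≤ Real.log X := Real.log_le_log (by linarith) hqu
    by_cases hpq : p = q
    · subst hpq
      rw [gaux, if_pos rfl, sub_self, E0]
      rw [norm_one, mul_one, halp, sq]
      exact mul_le_mul hlpX hlpX (Real.log_nonneg hp1) hL0.le
    · rw [gaux, if_neg hpq]
      have hD1 : (1:ℝ) ≤ |(p:ℝ) - (q:ℝ)| := by
        have hz : (p:ℤ) ≠ (q:ℤ) := by exact_mod_cast hpq
        have h1 : 1 ≤ |(p:ℤ) - (q:ℤ)| := Int.one_le_abs (by omega)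
        have h2 : ((|(p:ℤ) - (q:ℤ)| : ℤ) : ℝ) = |(p:ℝ) - (q:ℝ)| := by push_cast; ring_nf
        rw [← h2]; exact_mod_cast h1
      have hgap : |(p:ℝ) - (q:ℝ)| * Real.log (X/2)
          ≤ |(p:ℝ)*Real.log (p:ℝ) - (q:ℝ)*Real.log (q:ℝ)| :=
        gap' hhalf (by linarith) (by linarith)
      have habs : |2*Real.pi*((p:ℝ)*Real.log p) - 2*Real.pi*((q:ℝ)*Real.log q)|
          = 2*Real.pi * |(p:ℝ)*Real.log (p:ℝ) - (q:ℝ)*Real.log (q:ℝ)| := by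
        rw [← mul_sub, abs_mul, _root_.abs_of_pos (by positivity : (0:ℝ) < 2*Real.pi)]
      have hlow : Real.pi * (|(p:ℝ) - (q:ℝ)| * Real.log X)
          ≤ |2*Real.pi*((p:ℝ)*Real.log p) - 2*Real.pi*((q:ℝ)*Real.log q)| := by
        rw [habs]
        have hDL : |(p:ℝ) - (q:ℝ)| * Real.log X ≤ 2 * (|(p:ℝ) - (q:ℝ)| * Real.log (X/2)) := by
          have := mul_le_mul_of_nonneg_left hlogX2 (by linarith : (0:ℝ) ≤ |(p:ℝ) - (q:ℝ)|)
          linarith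
        calc Real.pi * (|(p:ℝ) - (q:ℝ)| * Real.log X)
            ≤ Real.pi * (2 * (|(p:ℝ) - (q:ℝ)| * Real.log (X/2))) :=
              mul_le_mul_of_nonneg_left hDL Real.pi_pos.le
          _ = 2 * Real.pi * (|(p:ℝ) - (q:ℝ)| * Real.log (X/2)) := by ring
          _ ≤ 2 * Real.pi * |(p:ℝ)*Real.log (p:ℝ) - (q:ℝ)*Real.log (q:ℝ)| :=
              mul_le_mul_of_nonneg_left hgap (by positivity)
      have hprod : (0:ℝ) < Real.pi * (|(p:ℝ) - (q:ℝ)| * Real.log X) := by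
        have : (0:ℝ) < |(p:ℝ) - (q:ℝ)| := by linarith
        positivity
      have hdne : (2*Real.pi*((p:ℝ)*Real.log p) - 2*Real.pi*((q:ℝ)*Real.log q)) ≠ 0 := by
        intro h
        rw [h] at hlow
        simp at hlow
        linarith
      have hE := Eb n hdne
      have hE2 : 2/|2*Real.pi*((p:ℝ)*Real.log p) - 2*Real.pi*((q:ℝ)*Real.log q)|
          ≤ 2/(Real.pi * (|(p:ℝ) - (q:ℝ)| * Real.log X)) :=
        div_le_div_of_nonneg_left (by norm_num) hprod hlow
      calc |Real.log (p:ℝ)| * |Real.log (q:ℝ)| * ‖∫ α in n..(n+1),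
            Complex.exp (Complex.I * ((2*Real.pi*((p:ℝ)*Real.log p) - 2*Real.pi*((q:ℝ)*Real.log q) : ℝ) : ℂ) * α)‖
          ≤ Real.log X * Real.log X * (2/(Real.pi * (|(p:ℝ) - (q:ℝ)| * Real.log X))) := by
            rw [halp, halq]
            refine mul_le_mul (mul_le_mul hlpX hlqX (Real.log_nonneg hq1) hL0.le)
              (le_trans hE hE2) (norm_nonneg _) (by positivity)
        _ = (2/Real.pi) * Real.log X * (1/|(p:ℝ) - (q:ℝ)|) := by
            have hDne : |(p:ℝ) - (q:ℝ)| ≠ 0 := by linarith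
            field_simp
  have hBpos : (0:ℝ) < (⌊X⌋₊ : ℕ) := by
    have : (100:ℕ) ≤ ⌊X⌋₊ := Nat.le_floor (by exact_mod_cast hX)
    exact_mod_cast Nat.lt_of_lt_of_le (by norm_num) this
  have hlogB : Real.log (⌊X⌋₊ : ℕ) ≤ Real.log X := Real.log_le_log hBpos (Nat.floor_le hX0.le)
  have hinner : ∀ p ∈ P, ∑ q ∈ P, gaux X p q ≤ 5 * Real.log X ^ 2 := by
    intro p hp
    have hpmem := hp
    rw [hP, Finset.mem_filter, Finset.mem_Ioc] at hpmem
    rw [← Finset.add_sum_erase P (gaux X p) hp]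
    have e1 : gaux X p p = Real.log X ^ 2 := by rw [gaux, if_pos rfl]
    have e2 : ∑ q ∈ P.erase p, gaux X p q
        = (2/Real.pi) * Real.log X * ∑ q ∈ P.erase p, 1/|(p:ℝ) - (q:ℝ)| := by
      rw [Finset.mul_sum]
      refine Finset.sum_congr rfl fun q hq => ?_
      rw [gaux, if_neg (Ne.symm (Finset.ne_of_mem_erase hq))]
    have e3 : ∑ q ∈ P.erase p, (1:ℝ)/|(p:ℝ) - (q:ℝ)| ≤ 2*(1 + Real.log X) := by
      refine le_trans (Finset.sum_le_sum_of_subset_of_nonneg ?_ ?_) (le_trans (harm (A := ⌊X / 2⌋₊) hpmem.1.2) ?_)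
      · exact Finset.erase_subset_erase p (Finset.filter_subset _ _)
      · intro q _ _; positivity
      · linarith
    rw [e1, e2]
    have hπ : (2:ℝ)/Real.pi ≤ 1 := by
      rw [div_le_one Real.pi_pos]
      linarith [Real.pi_gt_three]
    have h4 : (2/Real.pi) * Real.log X * ∑ q ∈ P.erase p, 1/|(p:ℝ) - (q:ℝ)|
        ≤ (2/Real.pi) * Real.log X * (2*(1 + Real.log X)) := by
      refine mul_le_mul_of_nonneg_left e3 (by positivity)
    have h5 : (2/Real.pi) * Real.log X * (2*(1 + Real.log X)) ≤ 4 * Real.log X ^ 2 := by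
      have h6 : (0:ℝ) ≤ Real.log X * (2*(1 + Real.log X)) := by positivity
      have h7 := mul_le_mul_of_nonneg_right hπ h6
      nlinarith
    nlinarith
  have hcard : (P.card : ℝ) ≤ X := by
    have h1 : P.card ≤ (Finset.Ioc ⌊X / 2⌋₊ ⌊X⌋₊).card := by
      rw [hP]; exact Finset.card_filter_le _ _
    have h2 : (Finset.Ioc ⌊X / 2⌋₊ ⌊X⌋₊).card ≤ ⌊X⌋₊ := by
      rw [Nat.card_Ioc]; omega
    calc (P.card : ℝ) ≤ (⌊X⌋₊ : ℝ) := by exact_mod_cast le_trans h1 h2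
      _ ≤ X := Nat.floor_le hX0.le
  calc ∑ p ∈ P, ∑ q ∈ P, |Real.log (p:ℝ)| * |Real.log (q:ℝ)| * ‖∫ α in n..(n+1),
        Complex.exp (Complex.I * ((2*Real.pi*((p:ℝ)*Real.log p) - 2*Real.pi*((q:ℝ)*Real.log q) : ℝ) : ℂ) * α)‖
      ≤ ∑ p ∈ P, ∑ q ∈ P, gaux X p q :=
        Finset.sum_le_sum fun p hp => Finset.sum_le_sum fun q hq => hterm p hp q hq
    _ ≤ ∑ p ∈ P, 5 * Real.log X ^ 2 := Finset.sum_le_sum hinner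
    _ = (P.card : ℝ) * (5 * Real.log X ^ 2) := by rw [Finset.sum_const, nsmul_eq_mul]
    _ ≤ X * (5 * Real.log X ^ 2) := mul_le_mul_of_nonneg_right hcard (by positivity)
    _ = 5 * X * Real.log X ^ 2 := by ring
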